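/- (Gadget correctness in the rank-one case of reduction D2.) Let m00, m01, m10, m11 be rational numbers with m11 ≠ 0 and m00*m11 = m01*m10, and let cu1, cu0, cv1, cv0 be rational numbers. Let H be the graph on two vertices u, v with no edges, equipped with the cardinality function c'_1(u) = cu1*m11, c'_0(u) = cu0*m01, c'_1(v) = cv1, c'_0(v) = cv0*m10/m11. Then for all zeta, eta in {0,1}: c'(H, u^zeta, v^eta) = c_zeta(u) * c_eta(v) * m_{zeta eta}, where c_1(u) = cu1, c_0(u) = cu0, c_1(v) = cv1, c_0(v) = cv0. -/

import Mathlib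

open Finset

noncomputable section
open scoped Classical

variable {V : Type*}

/-- `S` is an independent set of the simple graph `G`. -/
def Indep (G : SimpleGraph V) (S : Finset V) : Prop :=
  ∀ u ∈ S, ∀ w ∈ S, ¬ G.Adj u w

/-- Independent sets of the induced subgraph `G[W]`. -/
def indepOn [Fintype V] (G : SimpleGraph V) (W : Finset V) : Finset (Finset V) :=
  univ.filter fun S => S ⊆ W ∧ Indep G S

/-- Weight `c_{G[W]}(S)` of an independent set `S` of `G[W]` with respect to the
cardinality function given by vertex weights `c1, c0` and edge weights `ce`. -/
def wt [Fintype V] (G : SimpleGraph V) (c1 c0 : V → ℚ) (ce : Sym2 V → ℚ)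
    (W S : Finset V) : ℚ :=
  (∏ v ∈ S, c1 v) * (∏ v ∈ W \ S, c0 v) *
    ∏ e ∈ G.edgeFinset.filter (fun e => (∀ x ∈ e, x ∈ W) ∧ ∀ x ∈ e, x ∉ S), ce e

/-- `c(G[W])`: the weighted sum over all independent sets of `G[W]`. -/
def tot [Fintype V] (G : SimpleGraph V) (c1 c0 : V → ℚ) (ce : Sym2 V → ℚ)
    (W : Finset V) : ℚ :=
  ∑ S ∈ indepOn G W, wt G c1 c0 ce W S

/-- `c(G[W], v^η)`: the weighted sum over independent sets `S` of `G[W]` with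
`v ∈ S` iff `η = 1`. -/
def totC [Fintype V] (G : SimpleGraph V) (c1 c0 : V → ℚ) (ce : Sym2 V → ℚ)
    (W : Finset V) (v : V) (η : Bool) : ℚ :=
  ∑ S ∈ (indepOn G W).filter (fun S => v ∈ S ↔ η = true), wt G c1 c0 ce W S

/-- `c(G[W], u^ζ, v^η)`. -/
def totC2 [Fintype V] (G : SimpleGraph V) (c1 c0 : V → ℚ) (ce : Sym2 V → ℚ)
    (W : Finset V) (u v : V) (ζ η : Bool) : ℚ :=
  ∑ S ∈ (indepOn G W).filter (fun S => (u ∈ S ↔ ζ = true) ∧ (v ∈ S ↔ η = true)),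
    wt G c1 c0 ce W S


/-- Gadget correctness in the rank-one case of reduction D2:
on the edgeless graph `H` with two vertices `u, v` (vertices `0, 1` of `Fin 2`)
with `c'_1(u) = cu1*m11, c'_0(u) = cu0*m01, c'_1(v) = cv1, c'_0(v) = cv0*m10/m11`,
if `m11 ≠ 0` and `m00*m11 = m01*m10`, then
`c'(H, u^ζ, v^η) = c_ζ(u) * c_η(v) * m_{ζη}` for all `ζ, η ∈ {0,1}`. -/
theorem totC2_rank_one_gadget (m00 m01 m10 m11 cu1 cu0 cv1 cv0 : ℚ) (hm : m11 ≠ 0)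
    (hrank : m00 * m11 = m01 * m10) (ζ η : Bool) :
    totC2 (⊥ : SimpleGraph (Fin 2))
      ![cu1 * m11, cv1]
      ![cu0 * m01, cv0 * m10 / m11]
      (fun _ => 1)
      univ 0 1 ζ η =
    (cond ζ cu1 cu0) * (cond η cv1 cv0) * (cond ζ (cond η m11 m10) (cond η m01 m00)) := by
  
  have hS : ∀ (S0 : Finset (Fin 2)),
      (∀ S : Finset (Fin 2), ((0 ∈ S ↔ ζ = true) ∧ (1 ∈ S ↔ η = true)) ↔ S = S0) →
      totC2 (⊥ : SimpleGraph (Fin 2)) ![cu1 * m11, cv1] ![cu0 * m01, cv0 * m10 / m11]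
        (fun _ => 1) univ 0 1 ζ η
      = wt (⊥ : SimpleGraph (Fin 2)) ![cu1 * m11, cv1] ![cu0 * m01, cv0 * m10 / m11]
        (fun _ => 1) univ S0 := by
    intro S0 h
    rw [totC2, Finset.sum_filter]
    have hmem : S0 ∈ indepOn (⊥ : SimpleGraph (Fin 2)) univ := by
      simp [indepOn, Indep]
    rw [Finset.sum_eq_single_of_mem S0 hmem ?side, if_pos ((h S0).2 rfl)]
    case side =>
      intro S hs hne
      rw [if_neg]
      exact fun hp => hne ((h S).1 hp)
  cases ζ <;> cases η
  · rw [hS ∅ ?_]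
    · simp [wt, Finset.sdiff_eq_filter, Finset.prod_filter, Fin.prod_univ_two]
      field_simp
      linear_combination (-(cu0 * cv0)) * hrank
    · intro S
      constructor
      · rintro ⟨h0, h1⟩
        ext x; fin_cases x <;> simp_all
      · rintro rfl; simp
  · rw [hS {1} ?_]
    · simp [wt, Finset.sdiff_eq_filter, Finset.prod_filter, Fin.prod_univ_two]
      ring
    · intro S
      constructor
      · rintro ⟨h0, h1⟩
        ext x; fin_cases x <;> simp_all
      · rintro rfl; simp
  · rw [hS {0} ?_]
    · simp [wt, Finset.sdiff_eq_filter, Finset.prod_filter, Fin.prod_univ_two]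
      field_simp
    · intro S
      constructor
      · rintro ⟨h0, h1⟩
        ext x; fin_cases x <;> simp_all
      · rintro rfl; simp
  · rw [hS {0, 1} ?_]
    · simp [wt, Finset.sdiff_eq_filter, Finset.prod_filter, Fin.prod_univ_two]
      ring
    · intro S
      constructor
      · rintro ⟨h0, h1⟩
        ext x; fin_cases x <;> simp_all
      · rintro rfl; simp
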